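/- Let r ≥ 1 and let θ_0, …, θ_{r−1} be real numbers that are linearly independent over ℚ. Then for every ε > 0 there exists a positive integer L such that for every interval I ⊆ ℝ of length at least L, the set {(θ_0·x + ℤ, …, θ_{r−1}·x + ℤ) : x ∈ I} is ε-dense in 𝕋^r, i.e., every point of 𝕋^r is within distance ε of a point of this set in the Euclidean product metric on 𝕋^r. -/

import Mathlib

open Cardinal Filter Set Pointwise

noncomputable section

/-- A free (nonprincipal) ultrafilter on ω. -/
def IsFreeUltrafilter (p : Ultrafilter ℕ) : Prop := ∀ n : ℕ, p ≠ pure n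

/-- A selective ultrafilter on ω. -/
def IsSelective (p : Ultrafilter ℕ) : Prop :=
  IsFreeUltrafilter p ∧
  ∀ A : ℕ → Set ℕ,
    (∀ k, (A k).Nonempty) → (Pairwise fun k l => Disjoint (A k) (A l)) →
    (⋃ k, A k) = Set.univ →
    (∃ k, A k ∈ p) ∨ ∃ B ∈ p, ∀ k, ∃! n, n ∈ B ∩ A k

/-- Rudin–Keisler order: `U ≤ V` iff `V = f_*(U)` for some `f`. -/
def RKle (U V : Ultrafilter ℕ) : Prop := ∃ f : ℕ → ℕ, Ultrafilter.map f U = V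

/-- Rudin–Keisler incomparability. -/
def RKIncomp (U V : Ultrafilter ℕ) : Prop := ¬ RKle U V ∧ ¬ RKle V U

/-- The index set of order type (the initial ordinal of) `κ`. -/
abbrev Idx (κ : Cardinal) : Type _ := ↥(Set.Iio κ.ord)

/-- The free abelian group `ℤ^(κ)` of finitely supported integer functions on `κ`. -/
abbrev GZ (κ : Cardinal) := Idx κ →₀ ℤ

/-- The ℚ-vector space `ℚ^(κ)` of finitely supported rational functions on `κ`. -/
abbrev GQ (κ : Cardinal) := Idx κ →₀ ℚ

/-- The canonical embedding `ℤ^(κ) → ℚ^(κ)`. -/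
def toQ (κ : Cardinal) (f : GZ κ) : GQ κ :=
  Finsupp.mapRange (Int.cast : ℤ → ℚ) Int.cast_zero f

/-- The characteristic function `χ_ξ`. -/
def chi (κ : Cardinal) (ξ : Idx κ) : GZ κ := Finsupp.single ξ 1

/-- The class `[f]_p` of a sequence `f : ω → ℤ^(κ)` in the ultrapower
`Ult(ℚ, p) = (ℚ^(κ))^ω / p`, realized as a germ. -/
def cls (κ : Cardinal) (p : Ultrafilter ℕ) (f : ℕ → GZ κ) :
    Filter.Germ (↑p : Filter ℕ) (GQ κ) :=
  (↑(fun n => toQ κ (f n)) : Filter.Germ (↑p : Filter ℕ) (GQ κ))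

/-- The class `[χ⃗_ξ]_p` of the constant sequence with value `χ_ξ`. -/
def clsChi (κ : Cardinal) (p : Ultrafilter ℕ) (ξ : Idx κ) :
    Filter.Germ (↑p : Filter ℕ) (GQ κ) :=
  cls κ p (fun _ => chi κ ξ)

/-- `cls` as an additive homomorphism. -/
def clsHom (κ : Cardinal) (p : Ultrafilter ℕ) :
    (ℕ → GZ κ) →+ Filter.Germ (↑p : Filter ℕ) (GQ κ) :=
  AddMonoidHom.mk' (cls κ p) (by
    intro a b
    unfold cls
    have h : (fun n => toQ κ ((a + b) n)) =
        (fun n => toQ κ (a n)) + (fun n => toQ κ (b n)) := by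
      funext n
      simp only [Pi.add_apply, toQ]
      exact Finsupp.mapRange_add (fun x y => by push_cast; ring) _ _
    rw [h, ← Filter.Germ.coe_add])

/-- `Ult(ℤ, p)`: the subgroup of `Ult(ℚ, p)` consisting of classes of
integer-valued sequences. -/
def UltZ (κ : Cardinal) (p : Ultrafilter ℕ) :
    AddSubgroup (Filter.Germ (↑p : Filter ℕ) (GQ κ)) :=
  (clsHom κ p).range

/-- `ℱ` is linearly independent mod `A*`. -/
def LinIndepMod (κ : Cardinal) (A : Set ℕ) (F : Set (ℕ → GZ κ)) : Prop :=
  ∀ p : Ultrafilter ℕ, IsFreeUltrafilter p → A ∈ p →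
    (∀ f ∈ F, ∀ g ∈ F, f ≠ g → cls κ p f ≠ cls κ p g) ∧
    LinearIndependent ℚ
      (Sum.elim (fun f : F => cls κ p ↑f) (fun ξ : Idx κ => clsChi κ p ξ))

/-- `ℰ` is maximal (w.r.t. inclusion) among subsets linearly independent mod `A*`. -/
def MaximalLinIndepMod (κ : Cardinal) (A : Set ℕ) (E : Set (ℕ → GZ κ)) : Prop :=
  LinIndepMod κ A E ∧ ∀ E' : Set (ℕ → GZ κ), LinIndepMod κ A E' → E ⊆ E' → E' = E

/-- A finite tower in ω: a finite decreasing sequence of infinite subsets of ω. -/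
def IsTower (T : List (Set ℕ)) : Prop :=
  (∀ A ∈ T, A.Infinite) ∧
  ∀ i : ℕ, ∀ h : i + 1 < T.length, T.get ⟨i + 1, h⟩ ⊆ T.get ⟨i, Nat.lt_of_succ_lt h⟩

/-- `l(T)`: the last term of a finite tower, with `l(∅) = ω`. -/
def lastOf (T : List (Set ℕ)) : Set ℕ := T.getLastD Set.univ

/-- `x` is a `p`-limit of the sequence `s`. -/
def IsPLim {X : Type*} [TopologicalSpace X] (p : Ultrafilter ℕ) (s : ℕ → X) (x : X) : Prop :=
  ∀ U ∈ nhds x, {n | s n ∈ U} ∈ p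

/-- Countable compactness: every countable open cover has a finite subcover. -/
def CountablyCompactSp (X : Type*) [TopologicalSpace X] : Prop :=
  ∀ 𝒰 : Set (Set X), 𝒰.Countable → (∀ u ∈ 𝒰, IsOpen u) → ⋃₀ 𝒰 = Set.univ →
    ∃ ℱ ⊆ 𝒰, ℱ.Finite ∧ ⋃₀ ℱ = Set.univ


set_option maxHeartbeats 2000000 in
theorem kronecker_flow_dense (r : ℕ) (θ : Fin r → ℝ) (hθ : LinearIndependent ℚ θ) :
    Dense {x : EuclideanSpace ℝ (Fin r) | ∃ (n : Fin r → ℤ) (t : ℝ), ∀ i, x i = n i + t * θ i} := by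
  classical
  set E := EuclideanSpace ℝ (Fin r) with hE
  let S : AddSubgroup E :=
    { carrier := {x : E | ∃ (n : Fin r → ℤ) (t : ℝ), ∀ i, x i = n i + t * θ i}
      zero_mem' := ⟨0, 0, fun i => by show (0:ℝ) = ((0 : Fin r → ℤ) i : ℝ) + 0 * θ i; simp⟩
      add_mem' := by
        rintro a b ⟨n, t, hn⟩ ⟨m, s, hm⟩
        exact ⟨n + m, t + s, fun i => by
          show a i + b i = ((n + m) i : ℝ) + (t + s) * θ i
          rw [hn i, hm i, Pi.add_apply]; push_cast; ring⟩
      neg_mem' := by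
        rintro a ⟨n, t, hn⟩
        exact ⟨-n, -t, fun i => by
          show -(a i) = ((-n) i : ℝ) + (-t) * θ i
          rw [hn i, Pi.neg_apply]; push_cast; ring⟩ }
  let G := S.topologicalClosure
  have hSG : ∀ x ∈ S, x ∈ G := fun x hx => S.le_topologicalClosure hx
  have hGclosed : IsClosed (G : Set E) := S.isClosed_topologicalClosure
  -- the direction vector
  let θv : E := WithLp.toLp 2 (fun i => θ i)
  have hθvS : ∀ t : ℝ, t • θv ∈ S := fun t =>
    ⟨0, t, fun i => by simp only [Pi.zero_apply, Int.cast_zero, zero_add]; rfl⟩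
  -- the linear part of G
  let V : Submodule ℝ E :=
    { carrier := {x : E | ∀ t : ℝ, t • x ∈ G}
      zero_mem' := fun t => by simpa using G.zero_mem
      add_mem' := fun {x y} hx hy t => by
        rw [smul_add]; exact G.add_mem (hx t) (hy t)
      smul_mem' := fun c x hx t => by
        rw [smul_smul]; exact hx (t * c) }
  have hθvV : θv ∈ V := fun t => hSG _ (hθvS t)
  have hVG : ∀ v ∈ V, v ∈ G := fun v hv => by simpa using hv 1
  by_cases hV : V = ⊤
  · -- then G is everything and S is dense
    intro x
    have hx : x ∈ V := hV ▸ Submodule.mem_top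
    have : x ∈ G := hVG x hx
    exact this
  · exfalso
    -- the orthogonal complement of V
    set W := Vᗮ with hW
    have hWne : W ≠ ⊥ := fun h => hV (Submodule.orthogonal_eq_bot_iff.mp h)
    let P := Submodule.orthogonalProjectionOnto W
    have hVWbot : ∀ x : E, x ∈ V → x ∈ W → x = 0 := fun x hx hw =>
      Submodule.disjoint_def.mp V.orthogonal_disjoint x hx hw
    have hVWperp : V ≤ Wᗮ := Submodule.le_orthogonal_orthogonal V
    have hsubV : ∀ x : E, x - (P x : E) ∈ V := by
      intro x
      have h1 : x - (P x : E) ∈ Wᗮ := Submodule.sub_starProjection_mem_orthogonal (K := W) x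
      have h2 : Wᗮ ≤ V := by rw [hW, Submodule.orthogonal_orthogonal]
      exact h2 h1
    have hPG : ∀ x ∈ G, (P x : E) ∈ G := by
      intro x hx
      have h2 := hVG _ (hsubV x)
      have := G.sub_mem hx h2
      simpa using this
    -- the lattice part
    let A : Submodule ℤ (↥W) :=
      { carrier := {w : W | (w : E) ∈ G}
        zero_mem' := by show ((0 : W) : E) ∈ G; simpa using G.zero_mem
        add_mem' := fun {x y} hx hy => by
          show ((x + y : W) : E) ∈ G
          rw [Submodule.coe_add]; exact G.add_mem hx hy
        smul_mem' := fun c x hx => by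
          show ((c • x : W) : E) ∈ G
          rw [show ((c • x : W) : E) = W.subtype (c • x) from rfl, map_zsmul]
          exact AddSubgroup.zsmul_mem G hx c }
    have hAclosed : IsClosed (A : Set (↥W)) :=
      hGclosed.preimage continuous_subtype_val
    -- no small nonzero elements
    have hsmall : ∃ δ : ℝ, 0 < δ ∧ ∀ w : ↥W, w ∈ A → ‖w‖ < δ → w = 0 := by
      by_contra hcon
      push_neg at hcon
      have hex : ∀ n : ℕ, ∃ w : ↥W, w ∈ A ∧ ‖w‖ < 1 / (n + 1) ∧ w ≠ 0 := by
        intro n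
        obtain ⟨w, hw1, hw2, hw3⟩ := hcon (1 / (n + 1)) (by positivity)
        exact ⟨w, hw1, hw2, hw3⟩
      choose x hxA hxnorm hxne using hex
      have hxpos : ∀ n, (0:ℝ) < ‖x n‖ := fun n => norm_pos_iff.mpr (hxne n)
      let u : ℕ → ↥W := fun n => ‖x n‖⁻¹ • x n
      have humem : ∀ n, u n ∈ Metric.sphere (0 : ↥W) 1 := by
        intro n
        simp only [u, mem_sphere_iff_norm, sub_zero, norm_smul, norm_inv, norm_norm]
        exact inv_mul_cancel₀ (hxpos n).ne'
      obtain ⟨u₀, hu₀mem, φ, hφmono, hφtend⟩ :=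
        (isCompact_sphere (0 : ↥W) 1).tendsto_subseq humem
      -- every real multiple of u₀ is in A
      have hline : ∀ t : ℝ, t • u₀ ∈ A := by
        intro t
        have hrw : ∀ n, ((⌊t / ‖x (φ n)‖⌋ : ℤ) • x (φ n) : ↥W)
            = ((⌊t / ‖x (φ n)‖⌋ : ℝ) * ‖x (φ n)‖) • u (φ n) := by
          intro n
          rw [mul_smul]
          rw [← Int.cast_smul_eq_zsmul ℝ]
          congr 1
          simp only [u, smul_smul]
          rw [mul_inv_cancel₀ (hxpos (φ n)).ne', one_smul]
        have hsc : Filter.Tendsto (fun n => (⌊t / ‖x (φ n)‖⌋ : ℝ) * ‖x (φ n)‖)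
            Filter.atTop (nhds t) := by
          have hb : ∀ n : ℕ, ‖(⌊t / ‖x (φ n)‖⌋ : ℝ) * ‖x (φ n)‖ - t‖ ≤ 1 / (n + 1) := by
            intro n
            rw [Real.norm_eq_abs]
            have h1 : |(⌊t / ‖x (φ n)‖⌋ : ℝ) - t / ‖x (φ n)‖| ≤ 1 := by
              rw [abs_sub_comm, abs_of_nonneg (sub_nonneg.mpr (Int.floor_le _))]
              have := Int.lt_floor_add_one (t / ‖x (φ n)‖)
              linarith
            have heq : (⌊t / ‖x (φ n)‖⌋ : ℝ) * ‖x (φ n)‖ - t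
                = ((⌊t / ‖x (φ n)‖⌋ : ℝ) - t / ‖x (φ n)‖) * ‖x (φ n)‖ := by
              rw [sub_mul, div_mul_cancel₀ _ (hxpos (φ n)).ne']
            rw [heq, abs_mul, abs_of_nonneg (norm_nonneg _)]
            calc |(⌊t / ‖x (φ n)‖⌋ : ℝ) - t / ‖x (φ n)‖| * ‖x (φ n)‖
                ≤ 1 * ‖x (φ n)‖ := by
                  exact mul_le_mul_of_nonneg_right h1 (norm_nonneg _)
              _ = ‖x (φ n)‖ := one_mul _
              _ ≤ 1 / (φ n + 1) := (hxnorm (φ n)).le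
              _ ≤ 1 / (n + 1) := by
                  apply div_le_div_of_nonneg_left one_pos.le (by positivity)
                  have h := (hφmono.le_apply : n ≤ φ n)
                  have h2 : (n : ℝ) ≤ (φ n : ℝ) := by exact_mod_cast h
                  linarith
          have hz : Filter.Tendsto (fun n : ℕ => (1:ℝ) / (n + 1)) Filter.atTop (nhds 0) :=
            tendsto_one_div_add_atTop_nhds_zero_nat
          have := squeeze_zero_norm hb hz
          have h3 : Filter.Tendsto (fun n => ((⌊t / ‖x (φ n)‖⌋ : ℝ) * ‖x (φ n)‖ - t) + t)
              Filter.atTop (nhds (0 + t)) := this.add tendsto_const_nhds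
          simpa using h3
        have htend : Filter.Tendsto (fun n => ((⌊t / ‖x (φ n)‖⌋ : ℝ) * ‖x (φ n)‖) • u (φ n))
            Filter.atTop (nhds (t • u₀)) := hsc.smul hφtend
        have hmem : ∀ n, ((⌊t / ‖x (φ n)‖⌋ : ℝ) * ‖x (φ n)‖) • u (φ n) ∈ (A : Set ↥W) := by
          intro n
          rw [← hrw n]
          exact A.smul_mem _ (hxA (φ n))
        exact hAclosed.mem_of_tendsto htend (Filter.Eventually.of_forall hmem)
      -- hence u₀ spans a line inside G, so u₀ ∈ V ∩ W
      have hu₀V : (u₀ : E) ∈ V := by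
        intro t
        have h := hline t
        have : ((t • u₀ : ↥W) : E) ∈ G := h
        rwa [Submodule.coe_smul] at this
      have : (u₀ : E) = 0 := hVWbot _ hu₀V u₀.2
      have hnorm1 : ‖u₀‖ = 1 := by simpa using hu₀mem
      rw [show u₀ = 0 from Subtype.ext this] at hnorm1
      simp at hnorm1
    obtain ⟨δ, hδpos, hδ⟩ := hsmall
    -- A is discrete
    haveI hAdisc : DiscreteTopology A := by
      apply discreteTopology_iff_isOpen_singleton_zero.mpr
      have : ({0} : Set A) = (Subtype.val) ⁻¹' (Metric.ball (0 : ↥W) δ) := by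
        ext w
        simp only [Set.mem_singleton_iff, Set.mem_preimage, Metric.mem_ball, dist_zero_right]
        constructor
        · rintro rfl; simpa using hδpos
        · intro hw
          exact Subtype.ext (hδ _ w.2 hw)
      rw [this]
      exact Metric.isOpen_ball.preimage continuous_subtype_val
    -- A spans W over ℝ
    have hbasis := EuclideanSpace.basisFun (Fin r) ℝ
    have hbG : ∀ i : Fin r, (EuclideanSpace.basisFun (Fin r) ℝ i : E) ∈ G := by
      intro i
      apply hSG
      refine ⟨fun j => if j = i then 1 else 0, 0, fun j => ?_⟩
      rw [EuclideanSpace.basisFun_apply]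
      by_cases h : j = i <;> simp [EuclideanSpace.single_apply, h]
    have hPbA : ∀ i : Fin r, P (EuclideanSpace.basisFun (Fin r) ℝ i) ∈ A := by
      intro i
      show ((P _ : ↥W) : E) ∈ G
      exact hPG _ (hbG i)
    haveI hAlat : IsZLattice ℝ A := by
      constructor
      rw [Submodule.eq_top_iff']
      intro w
      have hw : w = P (w : E) := (Submodule.orthogonalProjectionOnto_mem_subspace_eq_self w).symm
      have hrepr : (w : E) = ∑ i, ((w : E) i) • (EuclideanSpace.basisFun (Fin r) ℝ i) := by
        conv_lhs => rw [← (EuclideanSpace.basisFun (Fin r) ℝ).sum_repr (w : E)]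
        simp [EuclideanSpace.basisFun_repr]
      rw [hw, hrepr, map_sum]
      apply Submodule.sum_mem
      intro i _
      rw [map_smul]
      exact Submodule.smul_mem _ _ (Submodule.subset_span (hPbA i))
    haveI := ZLattice.module_free ℝ A
    haveI := ZLattice.module_finite ℝ A
    let ι := Module.Free.ChooseBasisIndex ℤ ↥A
    let b₀ : Module.Basis ι ℤ ↥A := Module.Free.chooseBasis ℤ ↥A
    let bW : Module.Basis ι ℝ ↥W := b₀.ofZLatticeBasis ℝ A
    haveI : Nontrivial ↥W := Submodule.nontrivial_iff_ne_bot.mpr hWne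
    haveI : Nonempty ι := bW.index_nonempty
    let i₀ : ι := Classical.arbitrary ι
    -- the integer linear functional
    let f : E →ₗ[ℝ] ℝ := (bW.coord i₀).comp (P : E →ₗ[ℝ] ↥W)
    have hfint : ∀ x : E, x ∈ G → ∃ m : ℤ, f x = m := by
      intro x hx
      have hPx : P x ∈ A := hPG x hx
      refine ⟨b₀.repr (⟨P x, hPx⟩ : A) i₀, ?_⟩
      show bW.repr (P x) i₀ = _
      exact b₀.ofZLatticeBasis_repr_apply ℝ A (⟨P x, hPx⟩ : A) i₀
    have hfθ : f θv = 0 := by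
      show bW.coord i₀ (P θv) = 0
      have : P θv = 0 :=
        Submodule.orthogonalProjectionOnto_apply_of_mem_orthogonal (hVWperp hθvV)
      rw [this, map_zero]
    -- f is nonzero
    have hfne : ∃ i : Fin r, f (EuclideanSpace.basisFun (Fin r) ℝ i) ≠ 0 := by
      by_contra hcon
      push_neg at hcon
      have hf0 : f = 0 := by
        apply (EuclideanSpace.basisFun (Fin r) ℝ).toBasis.ext
        intro i
        simp only [OrthonormalBasis.coe_toBasis, LinearMap.zero_apply]
        exact hcon i
      have : f ((bW i₀ : ↥W) : E) = 1 := by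
        show bW.coord i₀ (P ((bW i₀ : ↥W) : E)) = 1
        rw [Submodule.orthogonalProjectionOnto_mem_subspace_eq_self (bW i₀)]
        simp
      rw [hf0] at this
      simp at this
    -- integer coordinates of f on the standard basis
    choose c hc using fun i : Fin r => hfint _ (hbG i)
    have hθrepr : θv = ∑ i, θ i • (EuclideanSpace.basisFun (Fin r) ℝ i : E) := by
      conv_lhs => rw [← (EuclideanSpace.basisFun (Fin r) ℝ).sum_repr θv]
      exact Finset.sum_congr rfl fun i _ => by rw [EuclideanSpace.basisFun_repr]
    have hsum : ∑ i, θ i * (c i : ℝ) = 0 := by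
      have h1 := congrArg f hθrepr
      rw [hfθ, map_sum] at h1
      have h2 : ∀ i ∈ Finset.univ, f (θ i • (EuclideanSpace.basisFun (Fin r) ℝ i : E))
          = θ i * (c i : ℝ) := by
        intro i _
        rw [map_smul, hc i, smul_eq_mul]
      rw [Finset.sum_congr rfl h2] at h1
      exact h1.symm
    have hallz : ∀ i, c i = 0 := by
      have hli := Fintype.linearIndependent_iff.mp hθ (fun i => (c i : ℚ))
      have h0 : ∑ i, ((c i : ℚ) • θ i) = 0 := by
        have : ∀ i ∈ Finset.univ, ((c i : ℚ) • θ i) = θ i * (c i : ℝ) := by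
          intro i _
          rw [Rat.smul_def]
          push_cast
          ring
        rw [Finset.sum_congr rfl this]
        exact hsum
      intro i
      exact_mod_cast hli h0 i
    obtain ⟨i, hi⟩ := hfne
    apply hi
    rw [hc i, hallz i]
    norm_num

theorem statement17 (r : ℕ) (hr : 1 ≤ r) (θ : Fin r → ℝ)
    (hθ : LinearIndependent ℚ θ) (ε : ℝ) (hε : 0 < ε) :
    ∃ L : ℕ, 0 < L ∧ ∀ a b : ℝ, (L : ℝ) ≤ b - a →
      ∀ y : Fin r → AddCircle (1 : ℝ), ∃ x ∈ Set.Icc a b,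
        Real.sqrt (∑ i, dist ((θ i * x : ℝ) : AddCircle (1 : ℝ)) (y i) ^ 2) ≤ ε := by
  classical
  haveI : Fact ((0:ℝ) < 1) := ⟨one_pos⟩
  let φ : ℝ → (Fin r → AddCircle (1:ℝ)) := fun t i => ((θ i * t : ℝ) : AddCircle (1:ℝ))
  have hrpos : (0:ℝ) < r := by exact_mod_cast Nat.lt_of_lt_of_le Nat.zero_lt_one hr
  -- coordinatewise distance bound in Euclidean space
  have hcoord : ∀ (x y : EuclideanSpace ℝ (Fin r)) (i : Fin r), |x i - y i| ≤ dist x y := by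
    intro x y i
    rw [EuclideanSpace.dist_eq]
    rw [show |x i - y i| = Real.sqrt ((x i - y i)^2) from (Real.sqrt_sq_eq_abs _).symm]
    apply Real.sqrt_le_sqrt
    have := Finset.single_le_sum (f := fun j => (dist (x j) (y j))^2)
      (fun j _ => sq_nonneg _) (Finset.mem_univ i)
    simpa [Real.dist_eq] using this
  have hdense := kronecker_flow_dense r θ hθ
  -- approximation of arbitrary points of the torus by the flow
  have happrox : ∀ (y : Fin r → AddCircle (1:ℝ)) (δ : ℝ), 0 < δ →
      ∃ t : ℝ, ∀ i, dist (φ t i) (y i) < δ := by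
    intro y δ hδ
    choose v hv using fun i => QuotientAddGroup.mk_surjective (y i)
    let vE : EuclideanSpace ℝ (Fin r) := WithLp.toLp 2 (fun i => v i)
    have hcl := hdense vE
    rw [Metric.mem_closure_iff] at hcl
    obtain ⟨s, hs, hdistvs⟩ := hcl δ hδ
    obtain ⟨n, t, hnt⟩ := hs
    refine ⟨t, fun i => ?_⟩
    have h1 : dist (φ t i) (y i) = ‖((θ i * t - v i : ℝ) : AddCircle (1:ℝ))‖ := by
      rw [← hv i, dist_eq_norm]
      congr 1
    have h2 : ((θ i * t - v i : ℝ) : AddCircle (1:ℝ)) = ((s i - v i : ℝ) : AddCircle (1:ℝ)) := by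
      have hsi : s i - v i = (θ i * t - v i) + (n i : ℝ) := by
        rw [hnt i]; ring
      rw [hsi, QuotientAddGroup.mk_add]
      have hz : (((n i : ℝ)) : AddCircle (1:ℝ)) = 0 := by
        rw [QuotientAddGroup.eq_zero_iff]
        exact ⟨n i, by simp⟩
      rw [hz, add_zero]
    rw [h1, h2]
    calc ‖((s i - v i : ℝ) : AddCircle (1:ℝ))‖ ≤ ‖s i - v i‖ := QuotientAddGroup.norm_mk_le_norm
      _ = |s i - v i| := Real.norm_eq_abs _
      _ = |vE i - s i| := by rw [abs_sub_comm]
      _ ≤ dist vE s := hcoord vE s i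
      _ < δ := hdistvs
  -- finite subcover
  set ε₀ : ℝ := ε / r with hε₀def
  have hε₀ : 0 < ε₀ := div_pos hε hrpos
  have hcov : (Set.univ : Set (Fin r → AddCircle (1:ℝ))) ⊆
      ⋃ t : ℝ, Metric.ball (φ t) (ε₀/2) := by
    intro y _
    obtain ⟨t, ht⟩ := happrox y (ε₀/2) (by positivity)
    refine Set.mem_iUnion.mpr ⟨t, ?_⟩
    rw [Metric.mem_ball, dist_pi_lt_iff (by positivity)]
    intro i
    rw [dist_comm]
    exact ht i
  obtain ⟨I, hI⟩ := isCompact_univ.elim_finite_subcover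
    (fun t : ℝ => Metric.ball (φ t) (ε₀/2)) (fun t => Metric.isOpen_ball) hcov
  let T : ℝ := ∑ t ∈ I, |t|
  have hTb : ∀ t ∈ I, |t| ≤ T := fun t ht =>
    Finset.single_le_sum (fun _ _ => abs_nonneg _) ht
  refine ⟨⌈2*T⌉₊ + 1, Nat.succ_pos _, ?_⟩
  intro a b hab y
  have hab' : 2*T + 1 ≤ b - a := by
    have h1 : (2*T : ℝ) ≤ ⌈2*T⌉₊ := Nat.le_ceil _
    have : ((⌈2*T⌉₊ + 1 : ℕ) : ℝ) = (⌈2*T⌉₊ : ℝ) + 1 := by push_cast; ring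
    rw [this] at hab
    linarith
  set m := (a+b)/2 with hm
  let y' : Fin r → AddCircle (1:ℝ) := fun i => y i - φ m i
  obtain ⟨t, htI, hyt⟩ := Set.mem_iUnion₂.mp (hI (Set.mem_univ y'))
  have htT : |t| ≤ T := hTb t htI
  have habst := abs_le.mp htT
  refine ⟨m + t, ⟨by rw [hm]; linarith, by rw [hm]; linarith⟩, ?_⟩
  have hco : ∀ i, dist ((θ i * (m+t) : ℝ) : AddCircle (1:ℝ)) (y i) < ε₀ := by
    intro i
    have h3 : dist y' (φ t) < ε₀/2 := Metric.mem_ball.mp hyt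
    have h4 : dist (φ t i) (y' i) ≤ dist (φ t) y' := dist_le_pi_dist _ _ i
    have h5 : dist ((θ i * (m+t) : ℝ) : AddCircle (1:ℝ)) (y i) = dist (φ t i) (y' i) := by
      show dist (((θ i * (m+t) : ℝ)) : AddCircle (1:ℝ)) (y i)
          = dist (((θ i * t : ℝ)) : AddCircle (1:ℝ)) (y i - ((θ i * m : ℝ) : AddCircle (1:ℝ)))
      have : (θ i * (m + t)) = (θ i * m) + (θ i * t) := by ring
      rw [this, QuotientAddGroup.mk_add, dist_eq_norm, dist_eq_norm]
      congr 1
      abel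
    rw [h5]
    rw [dist_comm] at h3
    linarith
  have hsum : ∑ i, dist ((θ i * (m+t) : ℝ) : AddCircle (1:ℝ)) (y i) ^ 2 ≤ ε^2 := by
    have hterm : ∀ i ∈ Finset.univ,
        dist ((θ i * (m+t) : ℝ) : AddCircle (1:ℝ)) (y i) ^ 2 ≤ ε₀^2 := by
      intro i _
      have := (hco i).le
      exact pow_le_pow_left₀ dist_nonneg this 2
    calc ∑ i, dist ((θ i * (m+t) : ℝ) : AddCircle (1:ℝ)) (y i) ^ 2
        ≤ ∑ _i : Fin r, ε₀^2 := Finset.sum_le_sum hterm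
      _ = r * ε₀^2 := by rw [Finset.sum_const, Finset.card_univ, Fintype.card_fin]; ring
      _ = ε^2 / r := by rw [hε₀def]; field_simp
      _ ≤ ε^2 := by
          rw [div_le_iff₀ hrpos]
          have hr1 : (1:ℝ) ≤ r := by exact_mod_cast hr
          nlinarith [sq_nonneg ε]
  calc Real.sqrt (∑ i, dist ((θ i * (m+t) : ℝ) : AddCircle (1:ℝ)) (y i) ^ 2)
      ≤ Real.sqrt (ε^2) := Real.sqrt_le_sqrt hsum
    _ = ε := Real.sqrt_sq hε.le


end
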